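/- Let K be a differential field with field of constants C. For a homogeneous linear differential equation aₙu⁽ⁿ⁾ + ... + a₁u' + a₀u = 0 with coefficients in K and aₙ ≠ 0, the set of solutions u ∈ K is a C-vector space of dimension at most n. -/

import Mathlib

/-- A differential field: a field equipped with a derivation. -/
structure DiffField (K : Type*) [Field K] where
  d : K → K
  d_add : ∀ a b : K, d (a + b) = d a + d b
  d_mul : ∀ a b : K, d (a * b) = d a * b + a * d b

namespace DiffField

variable {K : Type*} [Field K] (dk : DiffField K)

theorem d_zero : dk.d 0 = 0 := by
  have h := dk.d_add 0 0
  rw [add_zero] at h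
  exact (left_eq_add.mp h)

theorem d_one : dk.d 1 = 0 := by
  have h := dk.d_mul 1 1
  simp only [mul_one, one_mul] at h
  exact (left_eq_add.mp h)

/-- The subfield of constants of a differential field. -/
def constants : Subfield K where
  carrier := {x | dk.d x = 0}
  zero_mem' := dk.d_zero
  one_mem' := dk.d_one
  add_mem' := by
    intro a b ha hb
    simp only [Set.mem_setOf_eq] at *
    rw [dk.d_add, ha, hb, add_zero]
  neg_mem' := by
    intro a ha
    simp only [Set.mem_setOf_eq] at *
    have h := dk.d_add a (-a)
    rw [add_neg_cancel, dk.d_zero, ha, zero_add] at h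
    exact h.symm
  mul_mem' := by
    intro a b ha hb
    simp only [Set.mem_setOf_eq] at *
    rw [dk.d_mul, ha, hb, zero_mul, mul_zero, add_zero]
  inv_mem' := by
    intro a ha
    simp only [Set.mem_setOf_eq] at *
    by_cases h : a = 0
    · rw [h, inv_zero]; exact dk.d_zero
    · have hm := dk.d_mul a a⁻¹
      rw [mul_inv_cancel₀ h, dk.d_one, ha, zero_mul, zero_add] at hm
      exact (mul_eq_zero.mp hm.symm).resolve_left h

end DiffField

namespace DiffField

variable {K : Type*} [Field K] (dk : DiffField K)

theorem d_iter_add (i : ℕ) (u v : K) :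
    dk.d^[i] (u + v) = dk.d^[i] u + dk.d^[i] v := by
  induction i generalizing u v with
  | zero => rfl
  | succ i ih =>
      simp only [Function.iterate_succ_apply]
      rw [dk.d_add, ih]

theorem d_iter_const_mul (c : K) (hc : dk.d c = 0) (i : ℕ) (u : K) :
    dk.d^[i] (c * u) = c * dk.d^[i] u := by
  induction i generalizing u with
  | zero => rfl
  | succ i ih =>
      simp only [Function.iterate_succ_apply]
      rw [dk.d_mul, hc, zero_mul, zero_add, ih]

theorem d_sum {ι : Type*} (s : Finset ι) (f : ι → K) :
    dk.d (∑ j ∈ s, f j) = ∑ j ∈ s, dk.d (f j) := by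
  classical
  induction s using Finset.induction with
  | empty => simpa using dk.d_zero
  | insert _ _ h ih => rw [Finset.sum_insert h, Finset.sum_insert h, dk.d_add, ih]

end DiffField

/-- The solution set of a homogeneous linear differential equation
`aₙ u⁽ⁿ⁾ + ⋯ + a₁ u' + a₀ u = 0` of order `n` over a differential field `K`
is a vector space over the field of constants, of dimension at most `n`. -/
theorem solution_space_dim_le {K : Type*} [Field K] (dk : DiffField K)
    (n : ℕ) (a : ℕ → K) (han : a n ≠ 0) :
    ∃ S : Submodule dk.constants K,
      (∀ u : K, u ∈ S ↔ ∑ i ∈ Finset.range (n + 1), a i * dk.d^[i] u = 0) ∧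
      Module.rank dk.constants S ≤ n := by
  classical
  set L : K → K := fun u => ∑ i ∈ Finset.range (n + 1), a i * dk.d^[i] u with hL
  have hadd : ∀ u v, L (u + v) = L u + L v := by
    intro u v
    simp only [hL, dk.d_iter_add, mul_add, Finset.sum_add_distrib]
  have hzero : L 0 = 0 := by
    have h := hadd 0 0
    rw [add_zero] at h
    exact (left_eq_add.mp h)
  have hsmul : ∀ (c : dk.constants) (u : K), L ((c : K) * u) = (c : K) * L u := by
    intro c u
    simp only [hL]
    rw [Finset.mul_sum]
    refine Finset.sum_congr rfl fun i _ => ?_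
    rw [dk.d_iter_const_mul _ c.2 i u]; ring
  -- key cardinality lemma
  have key : ∀ (m : ℕ) (u : Fin m → K), (∀ j, L (u j) = 0) →
      LinearIndependent dk.constants u → m ≤ n := by
    intro m u hu hind
    rcases Nat.eq_zero_or_pos m with hm | hm
    · omega
    rcases Nat.eq_zero_or_pos n with hn | hn
    · exfalso
      have h0 := hu ⟨0, hm⟩
      simp only [hL] at h0
      subst hn
      simp only [zero_add, Finset.range_one, Finset.sum_singleton, Function.iterate_zero,
        id_eq] at h0
      exact hind.ne_zero ⟨0, hm⟩ ((mul_eq_zero.mp h0).resolve_left han)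
    -- n ≥ 1 from here on
    have hda : ∀ j, a n * dk.d^[n] (u j) = -∑ i ∈ Finset.range n, a i * dk.d^[i] (u j) := by
      intro j
      have h := hu j
      simp only [hL] at h
      rw [Finset.sum_range_succ] at h
      exact eq_neg_of_add_eq_zero_right h
    have hRn : ∀ b : Fin m → K, (∀ i < n, ∑ j, b j * dk.d^[i] (u j) = 0) →
        ∑ j, b j * dk.d^[n] (u j) = 0 := by
      intro b hb
      have h1 : a n * ∑ j, b j * dk.d^[n] (u j) = 0 := by
        rw [Finset.mul_sum]
        calc ∑ j, a n * (b j * dk.d^[n] (u j))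
            = ∑ j, b j * (a n * dk.d^[n] (u j)) := Finset.sum_congr rfl fun j _ => by ring
          _ = ∑ j, -∑ i ∈ Finset.range n, b j * (a i * dk.d^[i] (u j)) := by
              refine Finset.sum_congr rfl fun j _ => ?_
              rw [hda j, mul_neg, Finset.mul_sum]
          _ = -∑ j : Fin m, ∑ i ∈ Finset.range n, b j * (a i * dk.d^[i] (u j)) := by
              rw [Finset.sum_neg_distrib]
          _ = -∑ i ∈ Finset.range n, ∑ j, b j * (a i * dk.d^[i] (u j)) := by
              rw [Finset.sum_comm]
          _ = -∑ i ∈ Finset.range n, a i * ∑ j, b j * dk.d^[i] (u j) := by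
              congr 1
              refine Finset.sum_congr rfl fun i _ => ?_
              rw [Finset.mul_sum]
              exact Finset.sum_congr rfl fun j _ => by ring
          _ = 0 := by
              rw [Finset.sum_congr rfl fun i hi => by
                rw [hb i (Finset.mem_range.mp hi), mul_zero]]
              simp
      exact (mul_eq_zero.mp h1).resolve_left han
    have hRd : ∀ b : Fin m → K, (∀ i < n, ∑ j, b j * dk.d^[i] (u j) = 0) →
        ∀ i < n, ∑ j, dk.d (b j) * dk.d^[i] (u j) = 0 := by
      intro b hb i hi
      have h1 : dk.d (∑ j, b j * dk.d^[i] (u j)) = 0 := by rw [hb i hi, dk.d_zero]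
      rw [dk.d_sum] at h1
      have h2 : ∑ j, (dk.d (b j) * dk.d^[i] (u j) + b j * dk.d^[i + 1] (u j)) = 0 := by
        rw [← h1]
        refine Finset.sum_congr rfl fun j _ => ?_
        rw [dk.d_mul, Function.iterate_succ_apply']
      rw [Finset.sum_add_distrib] at h2
      have h3 : ∑ j, b j * dk.d^[i + 1] (u j) = 0 := by
        rcases eq_or_lt_of_le (Nat.succ_le_of_lt hi) with h | h
        · have h' : i + 1 = n := h
          rw [h']; exact hRn b hb
        · exact hb (i + 1) h
      rw [h3, add_zero] at h2
      exact h2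
    -- the Wronskian-type vectors are K-linearly independent
    have hvind : LinearIndependent K
        (fun j : Fin m => fun i : Fin n => dk.d^[(i : ℕ)] (u j)) := by
      rw [Fintype.linearIndependent_iff]
      intro g hg
      by_contra hne
      push_neg at hne
      obtain ⟨j1, hj1⟩ := hne
      have hRg : ∀ i < n, ∑ j, g j * dk.d^[i] (u j) = 0 := by
        intro i hi
        have h := congrFun hg ⟨i, hi⟩
        simpa [Finset.sum_apply, Pi.smul_apply, smul_eq_mul] using h
      set P : ℕ → Prop := fun k => ∃ b : Fin m → K,
        (∀ i < n, ∑ j, b j * dk.d^[i] (u j) = 0) ∧ b ≠ 0 ∧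
        (Finset.univ.filter fun j => b j ≠ 0).card = k with hP
      have hPex : ∃ k, P k := ⟨_, g, hRg, fun h => hj1 (congrFun h j1), rfl⟩
      obtain ⟨b, hbR, hbne, hbcard⟩ := Nat.find_spec hPex
      obtain ⟨j0, hj0⟩ := Function.ne_iff.mp hbne
      simp only [Pi.zero_apply] at hj0
      set c : Fin m → K := fun j => b j * (b j0)⁻¹ with hc
      have hcR : ∀ i < n, ∑ j, c j * dk.d^[i] (u j) = 0 := by
        intro i hi
        have h : ∑ j, c j * dk.d^[i] (u j) = (∑ j, b j * dk.d^[i] (u j)) * (b j0)⁻¹ := by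
          rw [Finset.sum_mul]
          exact Finset.sum_congr rfl fun j _ => by rw [hc]; ring
        rw [h, hbR i hi, zero_mul]
      have hcj0 : c j0 = 1 := mul_inv_cancel₀ hj0
      have hsupp : (Finset.univ.filter fun j => c j ≠ 0)
          = (Finset.univ.filter fun j => b j ≠ 0) := by
        ext j
        simp only [Finset.mem_filter, Finset.mem_univ, true_and, hc]
        constructor
        · intro h hb0; exact h (by rw [hb0, zero_mul])
        · intro h; exact mul_ne_zero h (inv_ne_zero hj0)
      have hdc : ∀ j, dk.d (c j) = 0 := by
        by_contra hne2
        push_neg at hne2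
        obtain ⟨j2, hj2⟩ := hne2
        have hne3 : (fun j => dk.d (c j)) ≠ (0 : Fin m → K) :=
          fun h => hj2 (congrFun h j2)
        have hmin : Nat.find hPex ≤ (Finset.univ.filter fun j => dk.d (c j) ≠ 0).card :=
          Nat.find_min' hPex ⟨fun j => dk.d (c j), hRd c hcR, hne3, rfl⟩
        have hsub : (Finset.univ.filter fun j => dk.d (c j) ≠ 0)
            ⊆ (Finset.univ.filter fun j => c j ≠ 0).erase j0 := by
          intro j hj
          simp only [Finset.mem_filter, Finset.mem_univ, true_and, Finset.mem_erase] at *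
          refine ⟨?_, ?_⟩
          · rintro rfl; exact hj (by rw [hcj0, dk.d_one])
          · intro h0; exact hj (by rw [h0, dk.d_zero])
        have hj0mem : j0 ∈ (Finset.univ.filter fun j => c j ≠ 0) := by
          simp only [Finset.mem_filter, Finset.mem_univ, true_and, hcj0]
          exact one_ne_zero
        have hlt : (Finset.univ.filter fun j => dk.d (c j) ≠ 0).card
            < (Finset.univ.filter fun j => c j ≠ 0).card :=
          lt_of_le_of_lt (Finset.card_le_card hsub) (Finset.card_erase_lt_of_mem hj0mem)
        rw [hsupp, hbcard] at hlt
        omega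
      have hc0 : ∑ j, c j * u j = 0 := by
        have h := hcR 0 hn
        simpa using h
      have hcsum : ∑ j, (⟨c j, hdc j⟩ : dk.constants) • u j = 0 := by
        exact hc0
      have h := Fintype.linearIndependent_iff.mp hind (fun j => ⟨c j, hdc j⟩) hcsum j0
      rw [Subtype.ext_iff] at h
      simp only [hcj0] at h
      exact one_ne_zero h
    have hcard := hvind.fintype_card_le_finrank
    simpa [Module.finrank_fin_fun] using hcard
  refine ⟨{ carrier := {u | L u = 0}
            add_mem' := fun {u v} hu hv => by
              simp only [Set.mem_setOf_eq] at *
              rw [hadd, hu, hv, add_zero]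
            zero_mem' := hzero
            smul_mem' := fun c u hu => by
              simp only [Set.mem_setOf_eq] at *
              show L ((c : K) * u) = 0
              rw [hsmul, hu, mul_zero] }, fun u => Iff.rfl, ?_⟩
  refine rank_le fun s hs => ?_
  refine key s.card (fun j => ((s.equivFin.symm j : _) : K)) (fun j => (s.equivFin.symm j).1.2) ?_
  have h1 := hs.map' _ (Submodule.ker_subtype _)
  exact h1.comp s.equivFin.symm s.equivFin.symm.injective
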